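/- Under the su(N) generator hypotheses, the Dirac matrices in the Dirac representation, and the Grassmann setup, with structure constants f a b c := −2·i·trace ((T a * T b − T b * T a) * T c), the following vanishing holds: for every 4×4 complex matrix Γ₀, every finite index type ι, every family Γ : ι → Matrix (Fin 4) (Fin 4) ℂ and every weight function w : ι → ℂ, Σ_{a,b,c : Fin (N^2−1)} Σ_{α : ι} f a b c · w α • ⟪Γ₀, T a⟫ * ⟪Γ α, T b⟫ * ⟪Γ α, T c⟫ = 0 in Λ. (In particular, f^{abc}·(ψ̄ T^a ψ)(ψ̄ T^b Γ_i ψ)(ψ̄ T^c Γ_i ψ) = 0 for each of the contracted Dirac structures Γ_i, by symmetry.) -/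
import Mathlib


noncomputable section

open Complex Matrix

/-- The Dirac γ-matrices in the Dirac representation. -/
def γm : Fin 4 → Matrix (Fin 4) (Fin 4) ℂ :=
  ![!![1,0,0,0; 0,1,0,0; 0,0,-1,0; 0,0,0,-1],
    !![0,0,0,1; 0,0,1,0; 0,-1,0,0; -1,0,0,0],
    !![0,0,0,-I; 0,0,I,0; 0,I,0,0; -I,0,0,0],
    !![0,0,1,0; 0,0,0,-1; -1,0,0,0; 0,1,0,0]]

/-- γ⁵ = i·γ⁰γ¹γ²γ³. -/
def γ5 : Matrix (Fin 4) (Fin 4) ℂ := I • (γm 0 * γm 1 * γm 2 * γm 3)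

/-- σ^{μν} = (i/2)[γ^μ, γ^ν]. -/
def σm (μ ν : Fin 4) : Matrix (Fin 4) (Fin 4) ℂ := (I / 2) • (γm μ * γm ν - γm ν * γm μ)

/-- The metric signs ε 0 = 1, ε 1 = ε 2 = ε 3 = −1 used to raise/lower indices. -/
def εs : Fin 4 → ℤ := ![1, -1, -1, -1]

/-- The totally antisymmetric Levi-Civita symbol on four indices,
normalized by ε₄ 0 1 2 3 = 1. -/
def ε4 (κ l μ ν : Fin 4) : ℤ :=
  Matrix.det (Matrix.of fun p q : Fin 4 => if ![κ, l, μ, ν] p = q then (1 : ℤ) else 0)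

/-- The Grassmann algebra generated by the 8N fermion components:
the exterior algebra of the direct sum of two copies of (Fin 4 × Fin N) → ℂ. -/
abbrev GrassAlg (N : ℕ) :=
  ExteriorAlgebra ℂ (((Fin 4 × Fin N) → ℂ) × ((Fin 4 × Fin N) → ℂ))

/-- ψ (A, i): the image in the Grassmann algebra of the standard basis vector
of the first summand indexed by (A, i). -/
def ψv (N : ℕ) (A : Fin 4) (i : Fin N) : GrassAlg N :=
  ExteriorAlgebra.ι ℂ (Pi.single (A, i) 1, 0)

/-- ψ̄ (A, i): the image in the Grassmann algebra of the standard basis vector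
of the second summand indexed by (A, i). -/
def ψbar (N : ℕ) (A : Fin 4) (i : Fin N) : GrassAlg N :=
  ExteriorAlgebra.ι ℂ (0, Pi.single (A, i) 1)

/-- The fermion bilinear B Γ i j = ∑_{A,B} Γ A B · ψ̄ (A,i) ψ (B,j). -/
def Bgr (N : ℕ) (Γ : Matrix (Fin 4) (Fin 4) ℂ) (i j : Fin N) : GrassAlg N :=
  ∑ A : Fin 4, ∑ B : Fin 4, Γ A B • (ψbar N A i * ψv N B j)

/-- ⟪Γ, X⟫ = ∑_{i,j} X i j · B Γ i j, the bilinear with Dirac structure Γ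
and color structure X. -/
def pairing (N : ℕ) (Γ : Matrix (Fin 4) (Fin 4) ℂ)
    (X : Matrix (Fin N) (Fin N) ℂ) : GrassAlg N :=
  ∑ i : Fin N, ∑ j : Fin N, X i j • Bgr N Γ i j

/-- ⟪Γ⟫ = ⟪Γ, 1⟫, the color-singlet bilinear. -/
def sing (N : ℕ) (Γ : Matrix (Fin 4) (Fin 4) ℂ) : GrassAlg N := pairing N Γ 1

/-- The antisymmetric structure constants f a b c = −2i·Tr([T a, T b]·T c). -/
def fConst {N : ℕ} (T : Fin (N ^ 2 - 1) → Matrix (Fin N) (Fin N) ℂ)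
    (a b c : Fin (N ^ 2 - 1)) : ℂ :=
  -2 * Complex.I * ((T a * T b - T b * T a) * T c).trace

lemma gen_anticomm {N : ℕ} (u v : ((Fin 4 × Fin N) → ℂ) × ((Fin 4 × Fin N) → ℂ)) :
    ExteriorAlgebra.ι ℂ u * ExteriorAlgebra.ι ℂ v
      = -(ExteriorAlgebra.ι ℂ v * ExteriorAlgebra.ι ℂ u) := by
  exact eq_neg_of_add_eq_zero_left (ExteriorAlgebra.ι_add_mul_swap u v)

lemma quad_gen_commute {N : ℕ} (x y z : ((Fin 4 × Fin N) → ℂ) × ((Fin 4 × Fin N) → ℂ)) :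
    Commute (ExteriorAlgebra.ι ℂ x * ExteriorAlgebra.ι ℂ y) (ExteriorAlgebra.ι ℂ z) := by
  unfold Commute SemiconjBy
  calc ExteriorAlgebra.ι ℂ x * ExteriorAlgebra.ι ℂ y * ExteriorAlgebra.ι ℂ z
      = ExteriorAlgebra.ι ℂ x * (ExteriorAlgebra.ι ℂ y * ExteriorAlgebra.ι ℂ z) := by noncomm_ring
    _ = ExteriorAlgebra.ι ℂ x * (-(ExteriorAlgebra.ι ℂ z * ExteriorAlgebra.ι ℂ y)) := by
        rw [gen_anticomm y z]
    _ = -(ExteriorAlgebra.ι ℂ x * ExteriorAlgebra.ι ℂ z) * ExteriorAlgebra.ι ℂ y := by noncomm_ring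
    _ = -(-(ExteriorAlgebra.ι ℂ z * ExteriorAlgebra.ι ℂ x)) * ExteriorAlgebra.ι ℂ y := by
        rw [gen_anticomm x z]
    _ = ExteriorAlgebra.ι ℂ z * (ExteriorAlgebra.ι ℂ x * ExteriorAlgebra.ι ℂ y) := by noncomm_ring

lemma quad_commute {N : ℕ} (x y z t : ((Fin 4 × Fin N) → ℂ) × ((Fin 4 × Fin N) → ℂ)) :
    Commute (ExteriorAlgebra.ι ℂ x * ExteriorAlgebra.ι ℂ y)
      (ExteriorAlgebra.ι ℂ z * ExteriorAlgebra.ι ℂ t) :=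
  (quad_gen_commute x y z).mul_right (quad_gen_commute x y t)

lemma pairing_commute (N : ℕ) (Γ Γ' : Matrix (Fin 4) (Fin 4) ℂ)
    (X X' : Matrix (Fin N) (Fin N) ℂ) :
    Commute (pairing N Γ X) (pairing N Γ' X') := by
  unfold pairing Bgr ψbar ψv
  apply Commute.sum_left; intro i _
  apply Commute.sum_left; intro j _
  apply Commute.sum_right; intro i' _
  apply Commute.sum_right; intro j' _
  apply Commute.smul_left
  apply Commute.smul_right
  apply Commute.sum_left; intro A _
  apply Commute.sum_left; intro B _
  apply Commute.sum_right; intro A' _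
  apply Commute.sum_right; intro B' _
  apply Commute.smul_left
  apply Commute.smul_right
  exact quad_commute _ _ _ _

lemma fConst_swap {N : ℕ} (T : Fin (N ^ 2 - 1) → Matrix (Fin N) (Fin N) ℂ)
    (a b c : Fin (N ^ 2 - 1)) : fConst T a c b = - fConst T a b c := by
  have cyc : ∀ X Y Z : Matrix (Fin N) (Fin N) ℂ, (X * Y * Z).trace = (Z * X * Y).trace := by
    intro X Y Z; rw [Matrix.trace_mul_comm (X * Y) Z, ← mul_assoc]
  unfold fConst
  rw [Matrix.sub_mul, Matrix.sub_mul, Matrix.trace_sub, Matrix.trace_sub,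
    cyc (T a) (T c) (T b), cyc (T c) (T a) (T b), cyc (T b) (T c) (T a)]
  ring

/-- **Vanishing of f-contracted cubic fermion combinations**:
f^{abc} (ψ̄ T^a Γ₀ ψ)(ψ̄ T^b Γ_α ψ)(ψ̄ T^c Γ_α ψ) = 0 for any contracted
family of Dirac structures Γ_α with weights w α. -/
theorem f_contraction_vanishes (N : ℕ) (hN : 2 ≤ N)
    (T : Fin (N ^ 2 - 1) → Matrix (Fin N) (Fin N) ℂ)
    (htr : ∀ a, (T a).trace = 0)
    (hherm : ∀ a, (T a)ᴴ = T a)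
    (horth : ∀ a b, (T a * T b).trace = if a = b then (1 / 2 : ℂ) else 0)
    (Γ₀ : Matrix (Fin 4) (Fin 4) ℂ) (ι : Type) [Fintype ι]
    (Γ : ι → Matrix (Fin 4) (Fin 4) ℂ) (w : ι → ℂ) :
    ∑ a, ∑ b, ∑ c, ∑ α : ι, (fConst T a b c * w α) •
        (pairing N Γ₀ (T a) * pairing N (Γ α) (T b) * pairing N (Γ α) (T c)) = 0 := by
  set S := ∑ a, ∑ b, ∑ c, ∑ α : ι, (fConst T a b c * w α) •
      (pairing N Γ₀ (T a) * pairing N (Γ α) (T b) * pairing N (Γ α) (T c)) with hS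
  have hswap : S = -S := by
    calc S = ∑ a, ∑ b, ∑ c, ∑ α : ι, (fConst T a c b * w α) •
        (pairing N Γ₀ (T a) * pairing N (Γ α) (T c) * pairing N (Γ α) (T b)) := by
          rw [hS]; exact Finset.sum_congr rfl fun a _ => Finset.sum_comm
      _ = ∑ a, ∑ b, ∑ c, ∑ α : ι, -((fConst T a b c * w α) •
        (pairing N Γ₀ (T a) * pairing N (Γ α) (T b) * pairing N (Γ α) (T c))) := by
          refine Finset.sum_congr rfl fun a _ => Finset.sum_congr rfl fun b _ =>
            Finset.sum_congr rfl fun c _ => Finset.sum_congr rfl fun α _ => ?_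
          rw [fConst_swap, mul_assoc (pairing N Γ₀ (T a)),
            (pairing_commute N (Γ α) (Γ α) (T c) (T b)).eq,
            ← mul_assoc (pairing N Γ₀ (T a)), neg_mul, neg_smul]
      _ = -S := by simp [hS, Finset.sum_neg_distrib]
  have h2 : (2 : ℂ) • S = 0 := by
    rw [two_smul]
    nth_rewrite 1 [hswap]
    exact neg_add_cancel S
  have := (smul_eq_zero.mp h2).resolve_left (by norm_num)
  exact this
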